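/- Let S = k[x_0, …, x_{m+m'}, y_0, …, y_{m+m'}], let I_m be the ideal generated by x_{i−1}y_{i−1} − x_i y_i for 1 ≤ i ≤ m, and let I_{m'} be the ideal generated by x_{j−1}y_{j−1} − x_j y_j for m+1 ≤ j ≤ m+m'. Then I_m ∩ I_{m'} = I_m · I_{m'}. -/

import Mathlib

open MvPolynomial

noncomputable section
namespace GraphIdealAux

variable {k : Type*} [CommRing k] {n : ℕ}

abbrev Vars (n : ℕ) := Fin (n + 1) ⊕ Fin (n + 1)

/-- exponent vector of `z_t = x_t y_t` -/
def zexp (t : Fin (n + 1)) : Vars n →₀ ℕ :=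
  Finsupp.single (Sum.inl t) 1 + Finsupp.single (Sum.inr t) 1

@[simp] lemma zexp_apply_inl (t s : Fin (n + 1)) :
    zexp t (Sum.inl s) = if t = s then 1 else 0 := by
  simp [zexp, Finsupp.single_apply]

@[simp] lemma zexp_apply_inr (t s : Fin (n + 1)) :
    zexp t (Sum.inr s) = if t = s then 1 else 0 := by
  simp [zexp, Finsupp.single_apply]

variable (k) in
/-- the element `z_t = x_t y_t` -/
def zz (t : Fin (n + 1)) : MvPolynomial (Vars n) k := monomial (zexp t) 1

lemma zz_eq (t : Fin (n + 1)) :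
    zz k t = X (Sum.inl t) * X (Sum.inr t) := by
  rw [zz, zexp, X, X, monomial_mul, one_mul]

/-- transferable exponent at position `t` (amount of `z_t` dividing the monomial, beyond `c`) -/
def ee (c : Fin (n + 1)) (d : Vars n →₀ ℕ) (t : Fin (n + 1)) : ℕ :=
  if c < t then min (d (Sum.inl t)) (d (Sum.inr t)) else 0

lemma ee_le_inl (c : Fin (n+1)) (d : Vars n →₀ ℕ) (t : Fin (n+1)) : ee c d t ≤ d (Sum.inl t) := by
  unfold ee; split <;> omega

lemma ee_le_inr (c : Fin (n+1)) (d : Vars n →₀ ℕ) (t : Fin (n+1)) : ee c d t ≤ d (Sum.inr t) := by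
  unfold ee; split <;> omega

def tot (c : Fin (n + 1)) (d : Vars n →₀ ℕ) : ℕ := ∑ t, ee c d t

def strip (c : Fin (n + 1)) (d : Vars n →₀ ℕ) : Vars n →₀ ℕ :=
  Finsupp.equivFunOnFinite.symm fun v =>
    Sum.casesOn v (fun t => d (Sum.inl t) - ee c d t) (fun t => d (Sum.inr t) - ee c d t)

@[simp] lemma strip_apply_inl (c : Fin (n+1)) (d : Vars n →₀ ℕ) (s : Fin (n+1)) :
    strip c d (Sum.inl s) = d (Sum.inl s) - ee c d s := rfl

@[simp] lemma strip_apply_inr (c : Fin (n+1)) (d : Vars n →₀ ℕ) (s : Fin (n+1)) :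
    strip c d (Sum.inr s) = d (Sum.inr s) - ee c d s := rfl

def surg (c : Fin (n + 1)) (d : Vars n →₀ ℕ) : Vars n →₀ ℕ :=
  tot c d • zexp c + strip c d

lemma sum_smul_zexp_apply (e : Fin (n + 1) → ℕ) (v : Vars n) :
    (∑ t, e t • zexp t) v = Sum.casesOn v e e := by
  rw [Finsupp.finset_sum_apply]
  cases v with
  | inl s =>
      simp only [Finsupp.smul_apply, zexp_apply_inl, smul_eq_mul, mul_ite, mul_one, mul_zero]
      simp [Finset.sum_ite_eq]
  | inr s =>
      simp only [Finsupp.smul_apply, zexp_apply_inr, smul_eq_mul, mul_ite, mul_one, mul_zero]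
      simp [Finset.sum_ite_eq]

lemma ee_zexp_add_strip (c : Fin (n + 1)) (d : Vars n →₀ ℕ) :
    (∑ t, ee c d t • zexp t) + strip c d = d := by
  ext v
  rw [Finsupp.add_apply, sum_smul_zexp_apply]
  cases v with
  | inl s => have := ee_le_inl c d s; simp only [strip_apply_inl]; omega
  | inr s => have := ee_le_inr c d s; simp only [strip_apply_inr]; omega

lemma prod_zz_pow (e : Fin (n + 1) → ℕ) (s : Finset (Fin (n + 1))) :
    (∏ t ∈ s, zz k t ^ e t) = monomial (∑ t ∈ s, e t • zexp t) 1 := by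
  classical
  induction s using Finset.induction with
  | empty => simp
  | @insert a s h ih =>
      rw [Finset.prod_insert h, Finset.sum_insert h, ih, zz, monomial_pow, monomial_mul]
      simp

lemma monomial_factor (c : Fin (n + 1)) (d : Vars n →₀ ℕ) :
    (monomial d 1 : MvPolynomial (Vars n) k)
      = (∏ t, zz k t ^ ee c d t) * monomial (strip c d) 1 := by
  rw [prod_zz_pow, monomial_mul, one_mul, ee_zexp_add_strip]

lemma monomial_surg (c : Fin (n + 1)) (d : Vars n →₀ ℕ) :
    (monomial (surg c d) 1 : MvPolynomial (Vars n) k)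
      = zz k c ^ tot c d * monomial (strip c d) 1 := by
  rw [zz, monomial_pow, monomial_mul, one_pow, one_mul, surg]

lemma ee_add_zexp (c : Fin (n + 1)) (d : Vars n →₀ ℕ) (t s : Fin (n + 1)) :
    ee c (d + zexp t) s = ee c d s + (if s = t ∧ c < t then 1 else 0) := by
  simp only [ee, Finsupp.add_apply, zexp_apply_inl, zexp_apply_inr]
  rcases eq_or_ne s t with rfl | h
  · simp only [eq_self_iff_true, if_true, true_and]
    split_ifs <;> omega
  · simp [h, Ne.symm h]

lemma tot_add_zexp (c : Fin (n + 1)) (d : Vars n →₀ ℕ) (t : Fin (n + 1)) :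
    tot c (d + zexp t) = tot c d + (if c < t then 1 else 0) := by
  unfold tot
  simp only [ee_add_zexp]
  rw [Finset.sum_add_distrib]
  congr 1
  simp only [ite_and]
  rw [Finset.sum_ite_eq' Finset.univ t (fun _ => if c < t then 1 else 0)]
  simp

lemma strip_add_zexp_le {c t : Fin (n + 1)} (h : t ≤ c) (d : Vars n →₀ ℕ) :
    strip c (d + zexp t) = strip c d + zexp t := by
  ext v
  have hct : ¬ c < t := not_lt.2 h
  cases v with
  | inl s =>
      simp only [strip_apply_inl, Finsupp.add_apply, zexp_apply_inl, ee_add_zexp,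
        strip_apply_inl]
      have := ee_le_inl c d s
      rcases eq_or_ne s t with rfl | hst
      · simp only [eq_self_iff_true, if_true, true_and, hct, and_false, if_false]
        omega
      · simp [hst, Ne.symm hst]
  | inr s =>
      simp only [strip_apply_inr, Finsupp.add_apply, zexp_apply_inr, ee_add_zexp,
        strip_apply_inr]
      have := ee_le_inr c d s
      rcases eq_or_ne s t with rfl | hst
      · simp only [eq_self_iff_true, if_true, true_and, hct, and_false, if_false]
        omega
      · simp [hst, Ne.symm hst]

lemma strip_add_zexp_gt {c t : Fin (n + 1)} (h : c < t) (d : Vars n →₀ ℕ) :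
    strip c (d + zexp t) = strip c d := by
  ext v
  cases v with
  | inl s =>
      simp only [strip_apply_inl, Finsupp.add_apply, zexp_apply_inl, ee_add_zexp]
      have := ee_le_inl c d s
      rcases eq_or_ne s t with rfl | hst
      · simp only [eq_self_iff_true, if_true, true_and, h, if_pos]
        omega
      · simp [hst, Ne.symm hst]
  | inr s =>
      simp only [strip_apply_inr, Finsupp.add_apply, zexp_apply_inr, ee_add_zexp]
      have := ee_le_inr c d s
      rcases eq_or_ne s t with rfl | hst
      · simp only [eq_self_iff_true, if_true, true_and, h, if_pos]
        omega
      · simp [hst, Ne.symm hst]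

lemma surg_add_le {c t : Fin (n + 1)} (h : t ≤ c) (d : Vars n →₀ ℕ) :
    surg c (d + zexp t) = surg c d + zexp t := by
  unfold surg
  rw [tot_add_zexp, strip_add_zexp_le h, if_neg (not_lt.2 h), add_zero]
  abel

lemma surg_add_gt {c t : Fin (n + 1)} (h : c < t) (d : Vars n →₀ ℕ) :
    surg c (d + zexp t) = surg c d + zexp c := by
  unfold surg
  rw [tot_add_zexp, strip_add_zexp_gt h, if_pos h, add_smul, one_smul]
  abel

variable (k) in
/-- the transfer operator -/
def T (c : Fin (n + 1)) : MvPolynomial (Vars n) k →ₗ[k] MvPolynomial (Vars n) k :=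
  (basisMonomials (Vars n) k).constr ℕ fun d => monomial (surg c d) 1

lemma basisMonomials_apply (d : Vars n →₀ ℕ) :
    basisMonomials (Vars n) k d = monomial d 1 :=
  congrFun (coe_basisMonomials _ _) d

lemma T_monomial (c : Fin (n + 1)) (d : Vars n →₀ ℕ) :
    T k c (monomial d 1) = monomial (surg c d) 1 := by
  rw [← basisMonomials_apply, T, Module.Basis.constr_basis]

lemma zz_mul_monomial (t : Fin (n + 1)) (d : Vars n →₀ ℕ) :
    zz k t * monomial d 1 = monomial (d + zexp t) 1 := by
  rw [zz, monomial_mul, one_mul, add_comm]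

lemma T_zz_mul {c t : Fin (n + 1)} (h : t ≤ c) (p : MvPolynomial (Vars n) k) :
    T k c (zz k t * p) = zz k t * T k c p := by
  have key : (T k c (n := n)).comp (LinearMap.mulLeft k (zz k t))
      = (LinearMap.mulLeft k (zz k t)).comp (T k c) := by
    apply Module.Basis.ext (basisMonomials (Vars n) k)
    intro d
    simp only [LinearMap.comp_apply, LinearMap.mulLeft_apply, basisMonomials_apply]
    rw [zz_mul_monomial, T_monomial, T_monomial, surg_add_le h, zz_mul_monomial]
  exact DFunLike.congr_fun key p

lemma T_zz_mul_gt {c t : Fin (n + 1)} (h : c < t) (p : MvPolynomial (Vars n) k) :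
    T k c (zz k t * p) = zz k c * T k c p := by
  have key : (T k c (n := n)).comp (LinearMap.mulLeft k (zz k t))
      = (LinearMap.mulLeft k (zz k c)).comp (T k c) := by
    apply Module.Basis.ext (basisMonomials (Vars n) k)
    intro d
    simp only [LinearMap.comp_apply, LinearMap.mulLeft_apply, basisMonomials_apply]
    rw [zz_mul_monomial, T_monomial, T_monomial, surg_add_gt h, zz_mul_monomial]
  exact DFunLike.congr_fun key p

lemma T_zz_mul_ge {c t : Fin (n + 1)} (h : c ≤ t) (p : MvPolynomial (Vars n) k) :
    T k c (zz k t * p) = zz k c * T k c p := by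
  rcases h.lt_or_eq with h' | rfl
  · exact T_zz_mul_gt h' p
  · exact T_zz_mul le_rfl p

lemma prod_sub_pow_mem (J : Ideal (MvPolynomial (Vars n) k)) (c : Fin (n + 1))
    (e : Fin (n + 1) → ℕ) (he : ∀ t, e t ≠ 0 → zz k t - zz k c ∈ J)
    (s : Finset (Fin (n + 1))) :
    (∏ t ∈ s, zz k t ^ e t) - zz k c ^ (∑ t ∈ s, e t) ∈ J := by
  classical
  induction s using Finset.induction with
  | empty => simp
  | @insert a s ha ih =>
      rw [Finset.prod_insert ha, Finset.sum_insert ha, pow_add]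
      have h1 : zz k a ^ e a - zz k c ^ e a ∈ J := by
        rcases Nat.eq_zero_or_pos (e a) with h0 | hpos
        · simp [h0]
        · exact J.mem_of_dvd (sub_dvd_pow_sub_pow _ _ _) (he a (by omega))
      have : zz k a ^ e a * (∏ t ∈ s, zz k t ^ e t)
            - zz k c ^ e a * zz k c ^ (∑ t ∈ s, e t)
          = (zz k a ^ e a - zz k c ^ e a) * (∏ t ∈ s, zz k t ^ e t)
            + zz k c ^ e a * ((∏ t ∈ s, zz k t ^ e t) - zz k c ^ (∑ t ∈ s, e t)) := by
        ring
      rw [this]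
      exact add_mem (Ideal.mul_mem_right _ _ h1) (Ideal.mul_mem_left _ _ ih)

lemma monomial_sub_surg_mem (J : Ideal (MvPolynomial (Vars n) k)) (c : Fin (n + 1))
    (hz : ∀ t, c < t → zz k t - zz k c ∈ J) (d : Vars n →₀ ℕ) :
    (monomial d 1 : MvPolynomial (Vars n) k) - monomial (surg c d) 1 ∈ J := by
  rw [monomial_factor c d, monomial_surg, ← sub_mul]
  refine Ideal.mul_mem_right _ _ (prod_sub_pow_mem J c (ee c d) ?_ Finset.univ)
  intro t ht
  refine hz t ?_
  by_contra hct
  exact ht (by simp [ee, hct])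

lemma sub_T_mem (J : Ideal (MvPolynomial (Vars n) k)) (c : Fin (n + 1))
    (hz : ∀ t, c < t → zz k t - zz k c ∈ J) (p : MvPolynomial (Vars n) k) :
    p - T k c p ∈ J := by
  induction p using MvPolynomial.induction_on' with
  | monomial u a =>
      have h1 : (monomial u a : MvPolynomial (Vars n) k) = a • monomial u 1 := by
        rw [smul_monomial, smul_eq_mul, mul_one]
      rw [h1, map_smul, T_monomial, ← smul_sub, smul_eq_C_mul]
      exact Ideal.mul_mem_left _ _ (monomial_sub_surg_mem J c hz u)
  | add p q hp hq =>
      rw [map_add]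
      have : p + q - (T k c p + T k c q) = (p - T k c p) + (q - T k c q) := by ring
      rw [this]
      exact add_mem hp hq

lemma inf_le_mul (c : Fin (n + 1)) (I J : Ideal (MvPolynomial (Vars n) k))
    (GI GJ : Set (MvPolynomial (Vars n) k))
    (hI : I = Ideal.span GI) (hJ : J = Ideal.span GJ)
    (hGI : ∀ g ∈ GI, ∀ p, T k c (g * p) = g * T k c p)
    (hGJ : ∀ g ∈ GJ, ∀ p, T k c (g * p) = 0)
    (hz : ∀ t, c < t → zz k t - zz k c ∈ J) :
    I ⊓ J ≤ I * J := by
  rintro f ⟨hfI, hfJ⟩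
  have hTf : T k c f = 0 := by
    rw [hJ] at hfJ
    obtain ⟨co, hsupp, hsum⟩ := Submodule.mem_span_set.mp hfJ
    rw [← hsum, map_finsuppSum]
    refine Finset.sum_eq_zero ?_
    intro g hg
    show T k c (co g • g) = 0
    rw [smul_eq_mul, mul_comm]
    exact hGJ g (hsupp hg) (co g)
  rw [hI] at hfI
  obtain ⟨co, hsupp, hsum⟩ := Submodule.mem_span_set.mp hfI
  have key : f = co.sum fun g r => g * (r - T k c r) := by
    have h1 : (co.sum fun g r => g * (r - T k c r))
        = (co.sum fun g r => r • g) - co.sum fun g r => g * T k c r := by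
      rw [← Finsupp.sum_sub]
      refine Finsupp.sum_congr ?_
      intro g _
      show g * (co g - T k c (co g)) = co g • g - g * T k c (co g)
      rw [smul_eq_mul, mul_sub, mul_comm g (co g)]
    have h2 : (co.sum fun g r => g * T k c r) = T k c f := by
      rw [← hsum, map_finsuppSum]
      refine Finsupp.sum_congr ?_
      intro g hg
      show g * T k c (co g) = T k c (co g • g)
      rw [smul_eq_mul, mul_comm (co g) g, hGI g (hsupp hg)]
    rw [h1, h2, hTf, sub_zero, hsum]
  rw [key]
  refine Submodule.sum_mem _ ?_
  intro g hg
  exact Ideal.mul_mem_mul (hI ▸ Ideal.subset_span (hsupp hg)) (sub_T_mem J c hz _)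

end GraphIdealAux
end

open GraphIdealAux in
theorem intersection_eq_product_graph_ideals
    (k : Type*) [Field k] (m m' : ℕ) (hm : 1 ≤ m) (hm' : 1 ≤ m')
    (Im Im' : Ideal (MvPolynomial (Fin (m + m' + 1) ⊕ Fin (m + m' + 1)) k))
    (hIm : Im = Ideal.span {p | ∃ i : Fin m,
      p = X (Sum.inl ⟨i.1, by omega⟩) * X (Sum.inr ⟨i.1, by omega⟩)
          - X (Sum.inl ⟨i.1 + 1, by omega⟩) * X (Sum.inr ⟨i.1 + 1, by omega⟩)})
    (hIm' : Im' = Ideal.span {p | ∃ j : Fin m',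
      p = X (Sum.inl ⟨m + j.1, by omega⟩) * X (Sum.inr ⟨m + j.1, by omega⟩)
          - X (Sum.inl ⟨m + j.1 + 1, by omega⟩) * X (Sum.inr ⟨m + j.1 + 1, by omega⟩)}) :
    Im ⊓ Im' = Im * Im' := by
  have hz : ∀ t : Fin (m + m' + 1), (⟨m, by omega⟩ : Fin (m + m' + 1)) < t →
      zz k t - zz k ⟨m, by omega⟩ ∈ Im' := by
    have step : ∀ r : ℕ, ∀ _ : m + r + 1 ≤ m + m',
        zz k (⟨m + r + 1, by omega⟩ : Fin (m + m' + 1))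
          - zz k ⟨m, by omega⟩ ∈ Im' := by
      intro r
      induction r with
      | zero =>
          intro h
          have hgen : (zz k (⟨m + 0, by omega⟩ : Fin (m + m' + 1)))
              - zz k ⟨m + 0 + 1, by omega⟩ ∈ Im' := by
            rw [hIm']
            refine Ideal.subset_span ⟨⟨0, by omega⟩, ?_⟩
            rw [zz_eq, zz_eq]
            rfl
          have h2 := neg_mem hgen
          have heq : -((zz k (⟨m + 0, by omega⟩ : Fin (m + m' + 1)))
                - zz k ⟨m + 0 + 1, by omega⟩)
              = zz k (⟨m + 0 + 1, by omega⟩ : Fin (m + m' + 1)) - zz k ⟨m + 0, by omega⟩ := by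
            ring
          rw [heq] at h2
          exact h2
      | succ r ih =>
          intro h
          have h1 : m + r + 1 ≤ m + m' := by omega
          have hgen : (zz k (⟨m + r + 1, by omega⟩ : Fin (m + m' + 1)))
              - zz k ⟨m + r + 1 + 1, by omega⟩ ∈ Im' := by
            rw [hIm']
            refine Ideal.subset_span ⟨⟨r + 1, by omega⟩, ?_⟩
            rw [zz_eq, zz_eq]
            rfl
          have h2 := add_mem (neg_mem hgen) (ih h1)
          have heq : -((zz k (⟨m + r + 1, by omega⟩ : Fin (m + m' + 1)))
                - zz k ⟨m + r + 1 + 1, by omega⟩)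
              + (zz k (⟨m + r + 1, by omega⟩ : Fin (m + m' + 1)) - zz k ⟨m, by omega⟩)
              = zz k (⟨m + r + 1 + 1, by omega⟩ : Fin (m + m' + 1))
                - zz k ⟨m, by omega⟩ := by
            ring
          rw [heq] at h2
          exact h2
    intro t ht
    have ht1 : m < t.1 := ht
    have ht2 : t.1 ≤ m + m' := by omega
    have hteq : t = (⟨m + (t.1 - m - 1) + 1, by omega⟩ : Fin (m + m' + 1)) := by
      ext; simp; omega
    rw [hteq]
    exact step (t.1 - m - 1) (by omega)
  refine le_antisymm
    (inf_le_mul (⟨m, by omega⟩ : Fin (m + m' + 1)) Im Im' _ _ hIm hIm' ?_ ?_ hz)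
    Ideal.mul_le_inf
  · rintro g ⟨i, rfl⟩ p
    have e1 : (X (Sum.inl (⟨i.1, by omega⟩ : Fin (m + m' + 1)))
          * X (Sum.inr (⟨i.1, by omega⟩ : Fin (m + m' + 1)))
          - X (Sum.inl (⟨i.1 + 1, by omega⟩ : Fin (m + m' + 1)))
          * X (Sum.inr (⟨i.1 + 1, by omega⟩ : Fin (m + m' + 1)))
          : MvPolynomial (Vars (m + m')) k)
        = zz k ⟨i.1, by omega⟩ - zz k ⟨i.1 + 1, by omega⟩ := by
      rw [zz_eq, zz_eq]
    rw [e1, sub_mul, map_sub,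
      T_zz_mul (show (⟨i.1, by omega⟩ : Fin (m + m' + 1)) ≤ ⟨m, by omega⟩ by
        simp only [Fin.mk_le_mk]; omega),
      T_zz_mul (show (⟨i.1 + 1, by omega⟩ : Fin (m + m' + 1)) ≤ ⟨m, by omega⟩ by
        simp only [Fin.mk_le_mk]; omega),
      sub_mul]
  · rintro g ⟨j, rfl⟩ p
    have e1 : (X (Sum.inl (⟨m + j.1, by omega⟩ : Fin (m + m' + 1)))
          * X (Sum.inr (⟨m + j.1, by omega⟩ : Fin (m + m' + 1)))
          - X (Sum.inl (⟨m + j.1 + 1, by omega⟩ : Fin (m + m' + 1)))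
          * X (Sum.inr (⟨m + j.1 + 1, by omega⟩ : Fin (m + m' + 1)))
          : MvPolynomial (Vars (m + m')) k)
        = zz k ⟨m + j.1, by omega⟩ - zz k ⟨m + j.1 + 1, by omega⟩ := by
      rw [zz_eq, zz_eq]
    rw [e1, sub_mul, map_sub,
      T_zz_mul_ge (show (⟨m, by omega⟩ : Fin (m + m' + 1)) ≤ ⟨m + j.1, by omega⟩ by
        simp only [Fin.mk_le_mk]; omega),
      T_zz_mul_ge (show (⟨m, by omega⟩ : Fin (m + m' + 1)) ≤ ⟨m + j.1 + 1, by omega⟩ by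
        simp only [Fin.mk_le_mk]; omega),
      sub_self]
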